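/- Let l be a prime, G a finite solvable group, and M a faithful simple F_l[G]-module. Let L be a group containing the additive group of M as a normal subgroup with L/M ≅ G, such that the conjugation action of L/M ≅ G on M coincides with the given module structure. Then any two complements H, H' of M in L are conjugate in L: there exists x ∈ L with x H x⁻¹ = H'. -/

import Mathlib

/-- Fixed points of a subgroup under a representation, as a submodule. -/
def fixedSub (l : ℕ) {G M : Type*} [Group G] [AddCommGroup M] [Module (ZMod l) M]
    (ρ : Representation (ZMod l) G M) (A : Subgroup G) : Submodule (ZMod l) M where
  carrier := {m | ∀ a ∈ A, ρ a m = m}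
  add_mem' hx hy a ha := by rw [map_add, hx a ha, hy a ha]
  zero_mem' a _ := map_zero _
  smul_mem' c x hx a ha := by rw [map_smul, hx a ha]

theorem mem_fixedSub {l : ℕ} {G M : Type*} [Group G] [AddCommGroup M] [Module (ZMod l) M]
    {ρ : Representation (ZMod l) G M} {A : Subgroup G} {m : M} :
    m ∈ fixedSub l ρ A ↔ ∀ a ∈ A, ρ a m = m := Iff.rfl

theorem stmt8 (l : ℕ) [Fact l.Prime] {G : Type*} [Group G] [Finite G] [Group.IsSolvable G]
    {M : Type*} [AddCommGroup M] [Module (ZMod l) M] [FiniteDimensional (ZMod l) M]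
    (ρ : Representation (ZMod l) G M)
    (hfaith : Function.Injective ρ) (hM : Nontrivial M)
    (hsimple : ∀ W : Submodule (ZMod l) M, (∀ g : G, W.map (ρ g) = W) → W = ⊥ ∨ W = ⊤)
    {L : Type*} [Group L] (ι : M → L) (hι_inj : Function.Injective ι)
    (hι_hom : ∀ m m' : M, ι (m + m') = ι m * ι m')
    (π : L →* G) (hπ : Function.Surjective π)
    (hker : ∀ x : L, x ∈ π.ker ↔ ∃ m : M, ι m = x)
    (hconj : ∀ (x : L) (m : M), x * ι m * x⁻¹ = ι (ρ (π x) m))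
    (H H' : Subgroup L)
    (hH₁ : ∀ x ∈ H, (∃ m : M, ι m = x) → x = 1)
    (hH₂ : ∀ x : L, ∃ h ∈ H, ∃ m : M, x = h * ι m)
    (hH'₁ : ∀ x ∈ H', (∃ m : M, ι m = x) → x = 1)
    (hH'₂ : ∀ x : L, ∃ h ∈ H', ∃ m : M, x = h * ι m) :
    ∃ x : L, ∀ y : L, y ∈ H' ↔ ∃ h ∈ H, y = x * h * x⁻¹ := by
  classical
  -- basic facts about ι
  have ι0 : ι 0 = 1 := by
    have h := hι_hom 0 0
    rw [add_zero] at h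
    have := mul_left_cancel (a := ι 0) (b := (1 : L)) (c := ι 0) (by rw [mul_one, ← h])
    exact this.symm
  have ιneg : ∀ m : M, ι (-m) = (ι m)⁻¹ := by
    intro m
    refine eq_inv_of_mul_eq_one_left ?_
    rw [← hι_hom, neg_add_cancel, ι0]
  have πι : ∀ m : M, π (ι m) = 1 := fun m => (hker (ι m)).mpr ⟨m, rfl⟩
  -- sections
  have exsec : ∀ (K : Subgroup L), (∀ x : L, ∃ h ∈ K, ∃ m, x = h * ι m) →
      ∀ g : G, ∃ h, h ∈ K ∧ π h = g := by
    intro K hK g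
    obtain ⟨x, hx⟩ := hπ g
    obtain ⟨h, hh, m, hm⟩ := hK x
    refine ⟨h, hh, ?_⟩
    rw [hm, map_mul, πι, mul_one] at hx
    exact hx
  have uniq : ∀ (K : Subgroup L), (∀ x ∈ K, (∃ m : M, ι m = x) → x = 1) →
      ∀ h ∈ K, ∀ h' ∈ K, π h = π h' → h = h' := by
    intro K hK1 h hh h' hh' hπeq
    have hmem : h * h'⁻¹ ∈ K := mul_mem hh (inv_mem hh')
    have : π (h * h'⁻¹) = 1 := by rw [map_mul, map_inv, hπeq, mul_inv_cancel]
    have := hK1 _ hmem ((hker _).mp this)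
    calc h = (h * h'⁻¹) * h' := by group
    _ = h' := by rw [this, one_mul]
  obtain ⟨sH, hsH⟩ := Classical.axiomOfChoice (exsec H hH₂)
  obtain ⟨sH', hsH'⟩ := Classical.axiomOfChoice (exsec H' hH'₂)
  have sHmem : ∀ g, sH g ∈ H := fun g => (hsH g).1
  have sHπ : ∀ g, π (sH g) = g := fun g => (hsH g).2
  have sH'mem : ∀ g, sH' g ∈ H' := fun g => (hsH' g).1
  have sH'π : ∀ g, π (sH' g) = g := fun g => (hsH' g).2
  have sHmul : ∀ g g', sH (g * g') = sH g * sH g' := by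
    intro g g'
    refine uniq H hH₁ _ (sHmem _) _ (mul_mem (sHmem g) (sHmem g')) ?_
    rw [map_mul, sHπ, sHπ, sHπ]
  have sH'mul : ∀ g g', sH' (g * g') = sH' g * sH' g' := by
    intro g g'
    refine uniq H' hH'₁ _ (sH'mem _) _ (mul_mem (sH'mem g) (sH'mem g')) ?_
    rw [map_mul, sH'π, sH'π, sH'π]
  have sHeq : ∀ h ∈ H, sH (π h) = h := fun h hh => uniq H hH₁ _ (sHmem _) _ hh (sHπ _)
  have sH'eq : ∀ h ∈ H', sH' (π h) = h := fun h hh => uniq H' hH'₁ _ (sH'mem _) _ hh (sH'π _)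
  -- the difference cocycle
  have exd : ∀ g : G, ∃ m : M, ι m = sH' g * (sH g)⁻¹ := by
    intro g
    refine (hker _).mp ?_
    show π _ = 1
    rw [map_mul, map_inv, sH'π, sHπ, mul_inv_cancel]
  obtain ⟨d, hd⟩ := Classical.axiomOfChoice exd
  have ρmul : ∀ (g g' : G) (m : M), ρ (g * g') m = ρ g (ρ g' m) := by
    intro g g' m; rw [map_mul]; rfl
  have dcoc : ∀ g g', d (g * g') = d g + ρ g (d g') := by
    intro g g'
    apply hι_inj
    have h1 : ι (ρ g (d g')) = sH' g * ι (d g') * (sH' g)⁻¹ := by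
      have h := hconj (sH' g) (d g'); rw [sH'π] at h; exact h.symm
    calc ι (d (g * g')) = sH' (g * g') * (sH (g * g'))⁻¹ := hd _
    _ = sH' g * sH' g' * (sH g')⁻¹ * (sH g)⁻¹ := by rw [sHmul, sH'mul]; group
    _ = sH' g * (ι (d g')) * (sH' g)⁻¹ * (sH' g * (sH g)⁻¹) := by rw [hd g']; group
    _ = ι (ρ g (d g')) * ι (d g) := by rw [h1, hd g]
    _ = ι (d g + ρ g (d g')) := by rw [← hι_hom, add_comm]
  -- existence of a coboundary expression
  have key : ∃ m0 : M, ∀ g : G, d g = m0 - ρ g m0 := by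
    have hl : l.Prime := Fact.out
    -- fixed submodules
    have Wstab : ∀ (A : Subgroup G), A.Normal → ∀ (g : G) (m : M),
        (∀ a ∈ A, ρ a m = m) → ∀ a ∈ A, ρ a (ρ g m) = ρ g m := by
      intro A hA g m hm a ha
      have h1 : a * g = g * (g⁻¹ * a * g) := by group
      calc ρ a (ρ g m) = ρ (a * g) m := (ρmul _ _ _).symm
      _ = ρ (g * (g⁻¹ * a * g)) m := by rw [h1]
      _ = ρ g (ρ (g⁻¹ * a * g) m) := ρmul _ _ _
      _ = ρ g m := by rw [hm _ (by simpa using hA.conj_mem a ha g⁻¹)]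
    have Wfix : ∀ (A : Subgroup G), A.Normal →
        ∀ g : G, (fixedSub l ρ A).map (ρ g) = fixedSub l ρ A := by
      intro A hA g
      apply le_antisymm
      · rintro x ⟨m, hm, rfl⟩
        exact fun a ha => Wstab A hA g m hm a ha
      · intro m hm
        refine ⟨ρ g⁻¹ m, fun a ha => Wstab A hA g⁻¹ m hm a ha, ?_⟩
        rw [← ρmul, mul_inv_cancel, map_one]
        rfl
    have Wbot : ∀ (A : Subgroup G), A.Normal → A ≠ ⊥ → fixedSub l ρ A = ⊥ := by
      intro A hA hAne
      rcases hsimple _ (Wfix A hA) with h | h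
      · exact h
      · exfalso
        apply hAne
        rw [eq_bot_iff]
        intro a ha
        have h2 : ρ a = ρ 1 := by
          rw [map_one]
          ext m
          have hm : m ∈ fixedSub l ρ A := by rw [h]; trivial
          simpa using hm a ha
        have := hfaith h2
        simpa using this
    rcases subsingleton_or_nontrivial G with hG | hG
    · refine ⟨0, fun g => ?_⟩
      have d1 : d 1 = 0 := by
        have h := dcoc 1 1
        rw [one_mul, map_one, Module.End.one_apply] at h
        exact ((left_eq_add).mp h)
      rw [Subsingleton.elim g 1, d1, map_zero, sub_zero]
    -- nontrivial case: derived series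
    have hsolv : ∃ n : ℕ, derivedSeries G n = ⊥ := Group.IsSolvable.solvable
    have hnspec : derivedSeries G (Nat.find hsolv) = ⊥ := Nat.find_spec hsolv
    have hn0 : Nat.find hsolv ≠ 0 := by
      intro h
      rw [h] at hnspec
      obtain ⟨g, hg⟩ := exists_ne (1 : G)
      apply hg
      have : g ∈ derivedSeries G 0 := Subgroup.mem_top g
      rw [hnspec] at this
      exact Subgroup.mem_bot.mp this
    set A0 : Subgroup G := derivedSeries G (Nat.find hsolv - 1) with hA0def
    have hA0norm : A0.Normal := derivedSeries_normal G _
    have hA0ne : A0 ≠ ⊥ := Nat.find_min hsolv (Nat.sub_lt (Nat.pos_of_ne_zero hn0) one_pos)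
    have hA0comm : ∀ a ∈ A0, ∀ b ∈ A0, a * b = b * a := by
      have hbot : ⁅A0, A0⁆ = ⊥ := by
        rw [hA0def, ← derivedSeries_succ, Nat.sub_add_cancel (Nat.one_le_iff_ne_zero.mpr hn0)]
        exact hnspec
      intro a ha b hb
      have := Subgroup.commutator_eq_bot_iff_le_centralizer.mp hbot ha
      exact (Subgroup.mem_centralizer_iff.mp this b hb).symm
    have hc0 : Nat.card A0 ≠ 0 := Nat.card_pos.ne'
    by_cases hall : ∀ a ∈ A0, a ^ (l ^ Nat.card A0) = 1
    · -- A0 is an l-group: contradiction with faithfulness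
      exfalso
      have hpA0 : IsPGroup l A0 := by
        intro a
        exact ⟨Nat.card A0, Subtype.ext (by simpa using hall a a.2)⟩
      letI : SMul A0 M := ⟨fun a m => ρ (a : G) m⟩
      letI : MulAction A0 M :=
        { one_smul := fun m => by show ρ ((1 : A0) : G) m = m; simp
          mul_smul := fun a b m => by
            show ρ (((a * b : A0)) : G) m = ρ (a : G) (ρ (b : G) m)
            rw [Subgroup.coe_mul, ρmul] }
      haveI : Finite M := Module.finite_of_finite (ZMod l)
      have hmod := hpA0.card_modEq_card_fixedPoints M
      have hcardM : l ∣ Nat.card M := by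
        letI := Fintype.ofFinite M
        rw [Nat.card_eq_fintype_card, Module.card_eq_pow_finrank (K := ZMod l) (V := M), ZMod.card]
        exact dvd_pow_self l Module.finrank_pos.ne'
      have hfixdvd : l ∣ Nat.card (MulAction.fixedPoints A0 M) :=
        (Nat.modEq_zero_iff_dvd.mp
          ((hmod.symm.trans (Nat.modEq_zero_iff_dvd.mpr hcardM)).symm.symm))
      have h0fix : (0 : M) ∈ MulAction.fixedPoints A0 M := fun a => map_zero (ρ (a : G))
      haveI : Nonempty (MulAction.fixedPoints A0 M) := ⟨⟨0, h0fix⟩⟩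
      have hlt : 1 < Nat.card (MulAction.fixedPoints A0 M) :=
        lt_of_lt_of_le hl.one_lt (Nat.le_of_dvd Nat.card_pos hfixdvd)
      have hnt : Nontrivial (MulAction.fixedPoints A0 M) :=
        Finite.one_lt_card_iff_nontrivial.mp hlt
      obtain ⟨x, y, hxy⟩ := hnt
      have hex : ∃ z ∈ MulAction.fixedPoints A0 M, z ≠ (0 : M) := by
        by_contra hcon
        push_neg at hcon
        exact hxy (Subtype.ext (by rw [hcon x.1 x.2, hcon y.1 y.2]))
      obtain ⟨z, hz, hz0⟩ := hex
      have hzW : z ∈ fixedSub l ρ A0 := fun a ha => hz ⟨a, ha⟩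
      rw [Wbot A0 hA0norm hA0ne] at hzW
      exact hz0 ((Submodule.mem_bot _).mp hzW)
    · push_neg at hall
      obtain ⟨a0, ha0, ha0N⟩ := hall
      -- the l'-part of A0
      set A : Subgroup G :=
        { carrier := {x | ∃ a ∈ A0, a ^ (l ^ Nat.card A0) = x}
          one_mem' := ⟨1, one_mem _, one_pow _⟩
          mul_mem' := by
            rintro x y ⟨a, ha, rfl⟩ ⟨b, hb, rfl⟩
            exact ⟨a * b, mul_mem ha hb, (Commute.mul_pow (hA0comm a ha b hb) _)⟩
          inv_mem' := by
            rintro x ⟨a, ha, rfl⟩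
            exact ⟨a⁻¹, inv_mem ha, by rw [inv_pow]⟩ } with hAdef
      have memA : ∀ x : G, x ∈ A ↔ ∃ a ∈ A0, a ^ (l ^ Nat.card A0) = x := fun x => Iff.rfl
      have hAnorm : A.Normal := by
        constructor
        intro x hx g
        obtain ⟨a, ha, rfl⟩ := (memA x).mp hx
        exact (memA _).mpr ⟨g * a * g⁻¹, hA0norm.conj_mem a ha g, conj_pow⟩
      have hAne : A ≠ ⊥ := by
        intro h
        apply ha0N
        have : a0 ^ (l ^ Nat.card A0) ∈ A := (memA _).mpr ⟨a0, ha0, rfl⟩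
        rw [h] at this
        exact Subgroup.mem_bot.mp this
      have hordA : ∀ x ∈ A, ¬ l ∣ orderOf x := by
        intro x hx
        obtain ⟨a, ha, rfl⟩ := (memA x).mp hx
        have ht0 : orderOf a ≠ 0 := (orderOf_pos a).ne'
        have htc : orderOf a ∣ Nat.card A0 := by
          have := orderOf_dvd_natCard (⟨a, ha⟩ : A0)
          rwa [Subgroup.orderOf_mk] at this
        have hic : (orderOf a).factorization l ≤ Nat.card A0 := by
          have h1 : l ^ (orderOf a).factorization l ∣ Nat.card A0 :=
            dvd_trans (Nat.ordProj_dvd (orderOf a) l) htc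
          calc (orderOf a).factorization l ≤ l ^ (orderOf a).factorization l :=
                Nat.le_of_lt (Nat.lt_pow_self hl.one_lt)
          _ ≤ Nat.card A0 := Nat.le_of_dvd (Nat.pos_of_ne_zero hc0) h1
        have hdvd : orderOf (a ^ (l ^ Nat.card A0)) ∣ ordCompl[l] (orderOf a) := by
          apply orderOf_dvd_of_pow_eq_one
          rw [← pow_mul]
          apply orderOf_dvd_iff_pow_eq_one.mp
          calc orderOf a = l ^ (orderOf a).factorization l * ordCompl[l] (orderOf a) :=
                (Nat.ordProj_mul_ordCompl_eq_self (orderOf a) l).symm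
          _ ∣ l ^ Nat.card A0 * ordCompl[l] (orderOf a) :=
                mul_dvd_mul_right (pow_dvd_pow l hic) _
        intro hdl
        exact Nat.not_dvd_ordCompl hl ht0 (hdl.trans hdvd)
      have hcardA : ¬ l ∣ Nat.card A := by
        intro hdl
        obtain ⟨x, hx⟩ := exists_prime_orderOf_dvd_card' (G := A) l hdl
        apply hordA (x : G) x.2
        rw [Subgroup.orderOf_coe, hx]
      -- averaging
      letI := Fintype.ofFinite (↥A)
      set m1 : M := ∑ b : A, d (b : G) with hm1
      have hsum : ∀ a : A, (Fintype.card A) • d ((a : A) : G) + ρ ((a : A) : G) m1 = m1 := by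
        intro a
        have h1 : ∑ b : A, d (((a * b : A)) : G) = m1 := by
          rw [hm1]
          exact Equiv.sum_comp (Equiv.mulLeft a) (fun b : A => d (b : G))
        have h2 : ∀ b : A, d (((a * b : A)) : G) = d (a : G) + ρ (a : G) (d (b : G)) := by
          intro b
          rw [Subgroup.coe_mul]
          exact dcoc _ _
        calc (Fintype.card A) • d ((a : A) : G) + ρ ((a : A) : G) m1
            = ∑ _b : A, d ((a : A) : G) + ∑ b : A, ρ ((a : A) : G) (d (b : G)) := by
              rw [hm1, map_sum, Finset.sum_const, Finset.card_univ]
        _ = ∑ b : A, (d ((a : A) : G) + ρ ((a : A) : G) (d (b : G))) :=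
              (Finset.sum_add_distrib).symm
        _ = ∑ b : A, d (((a * b : A)) : G) := by
              refine Finset.sum_congr rfl fun b _ => (h2 b).symm
        _ = m1 := h1
      have hk0 : ((Nat.card A : ZMod l)) ≠ 0 := by
        rw [Ne, ZMod.natCast_eq_zero_iff]
        exact hcardA
      set k : ZMod l := (Nat.card A : ZMod l) with hk
      set m0 : M := k⁻¹ • m1 with hm0def
      have hdA : ∀ a ∈ A, d a = m0 - ρ a m0 := by
        intro a ha
        have h : (Fintype.card A) • d a + ρ a m1 = m1 := hsum ⟨a, ha⟩
        have h2 : k • d a = m1 - ρ a m1 := by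
          rw [hk, Nat.card_eq_fintype_card, Nat.cast_smul_eq_nsmul]
          exact eq_sub_of_add_eq h
        calc d a = k⁻¹ • (k • d a) := (inv_smul_smul₀ hk0 _).symm
        _ = k⁻¹ • m1 - k⁻¹ • (ρ a m1) := by rw [h2, smul_sub]
        _ = m0 - ρ a m0 := by rw [hm0def, map_smul]
      set e : G → M := fun g => d g - (m0 - ρ g m0) with he
      have ecoc : ∀ g g', e (g * g') = e g + ρ g (e g') := by
        intro g g'
        simp only [he]
        rw [dcoc, map_sub, map_sub, ρmul]
        abel
      have eA : ∀ a ∈ A, e a = 0 := by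
        intro a ha
        simp only [he]
        rw [hdA a ha, sub_self]
      have e1 : e 1 = 0 := by
        have h := ecoc 1 1
        rw [one_mul, map_one, Module.End.one_apply] at h
        exact (left_eq_add).mp h
      have einv : ∀ g, ρ g (e g⁻¹) = - e g := by
        intro g
        have h := ecoc g g⁻¹
        rw [mul_inv_cancel, e1] at h
        exact eq_neg_of_add_eq_zero_right h.symm
      have efix : ∀ g, e g ∈ fixedSub l ρ A := by
        intro g b hb
        have ha' : g⁻¹ * b * g ∈ A := by simpa using hAnorm.conj_mem b hb g⁻¹
        have h1 : e (g * ((g⁻¹ * b * g) * g⁻¹)) = 0 := by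
          rw [show g * ((g⁻¹ * b * g) * g⁻¹) = b by group]
          exact eA b hb
        rw [ecoc, ecoc, eA _ ha', zero_add] at h1
        have h2 : ρ g (ρ (g⁻¹ * b * g) (e g⁻¹)) = - (ρ b (e g)) := by
          rw [← ρmul]
          have h3 : g * (g⁻¹ * b * g) = b * g := by group
          rw [h3, ρmul, einv, map_neg]
        rw [h2] at h1
        -- h1 : e g + - (ρ b (e g)) = 0
        have h4 : e g - ρ b (e g) = 0 := by rw [sub_eq_add_neg]; exact h1
        exact (sub_eq_zero.mp h4).symm
      refine ⟨m0, fun g => ?_⟩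
      have hg := efix g
      rw [Wbot A hAnorm hAne] at hg
      have : e g = 0 := (Submodule.mem_bot _).mp hg
      simp only [he] at this
      exact sub_eq_zero.mp this
  obtain ⟨m0, hm0⟩ := key
  -- conjugation by ι m0 carries sH to sH'
  have conj_sec : ∀ g : G, ι m0 * sH g * (ι m0)⁻¹ = sH' g := by
    intro g
    have h1 : sH g * ι (-m0) * (sH g)⁻¹ = ι (ρ g (-m0)) := by
      have h := hconj (sH g) (-m0); rw [sHπ] at h; exact h
    calc ι m0 * sH g * (ι m0)⁻¹ = ι m0 * (sH g * ι (-m0) * (sH g)⁻¹) * sH g := by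
          rw [← ιneg]; group
    _ = ι m0 * ι (ρ g (-m0)) * sH g := by rw [h1]
    _ = ι (m0 + ρ g (-m0)) * sH g := by rw [hι_hom]
    _ = ι (d g) * sH g := by rw [map_neg, ← sub_eq_add_neg, ← hm0 g]
    _ = sH' g := by rw [hd g]; group
  refine ⟨ι m0, fun y => ⟨fun hy => ?_, ?_⟩⟩
  · refine ⟨sH (π y), sHmem _, ?_⟩
    rw [conj_sec (π y), sH'eq y hy]
  · rintro ⟨h, hh, rfl⟩
    rw [← sHeq h hh, conj_sec (π h)]
    exact sH'mem _
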